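/- Let S₁, ..., S_m be nonempty strings (m ≥ 1) over pairwise disjoint alphabets, and let c₁, ..., c_{m−1} be pairwise distinct symbols not occurring in any S_i. Let S = S₁ c₁ S₂ c₂ ⋯ c_{m−1} S_m. Then γ(S) ≥ Σ_{i=1}^{m} γ(S_i). -/

import Mathlib

/-- `Γ` is an attractor of `S`: every nonempty substring `S[i..j]` (1-based) has an
occurrence `S[i'..j']` covering a position of `Γ`. -/
def IsAttractor {α : Type} (S : List α) (Γ : Finset ℕ) : Prop :=
  (∀ p ∈ Γ, 1 ≤ p ∧ p ≤ S.length) ∧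
  ∀ i j : ℕ, 1 ≤ i → i ≤ j → j ≤ S.length →
    ∃ i' j' : ℕ, 1 ≤ i' ∧ i' ≤ j' ∧ j' ≤ S.length ∧
      (S.drop (i' - 1)).take (j' - i' + 1) = (S.drop (i - 1)).take (j - i + 1) ∧
      ∃ p ∈ Γ, i' ≤ p ∧ p ≤ j'

/-- `γ(S)`: the minimum size of an attractor of `S`. -/
noncomputable def gamma {α : Type} (S : List α) : ℕ :=
  sInf { m | ∃ Γ : Finset ℕ, IsAttractor S Γ ∧ Γ.card = m }

/-- `joinSep [S₁, ..., S_m] [c₁, ..., c_{m−1}] = S₁ c₁ S₂ c₂ ⋯ c_{m−1} S_m`: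
concatenation of the strings interleaved with the separator symbols. -/
def joinSep {α : Type} : List (List α) → List α → List α
  | [], _ => []
  | [T], _ => T
  | T :: Ts, [] => T ++ joinSep Ts []
  | T :: Ts, c :: cs => T ++ c :: joinSep Ts cs

/- ### Auxiliary lemmas -/

lemma sub_len {α : Type} (S : List α) (i j : ℕ) (h1 : 1 ≤ i) (hij : i ≤ j)
    (hj : j ≤ S.length) : ((S.drop (i-1)).take (j-i+1)).length = j - i + 1 := by
  simp; omega

lemma sub_getElem' {α : Type} (S : List α) (a L k b : ℕ)
    (h : k < ((S.drop a).take L).length) (hb : a + k = b) :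
    ((S.drop a).take L)[k] = S[b]'(by subst hb; simp at h; omega) := by
  subst hb; simp

lemma getElem_idx_congr {α : Type} {l : List α} {i j : ℕ} (h : i = j) (hi : i < l.length) :
    l[i]'hi = l[j]'(h ▸ hi) := by subst h; rfl

lemma elem_mid {α : Type} (T R : List α) (c : α) :
    (T ++ c :: R)[T.length]'(by simp) = c := by
  rw [List.getElem_append_right (le_refl _)]
  simp

lemma elem_left {α : Type} (T R : List α) (c : α) (k : ℕ) (hk : k < T.length) :
    (T ++ c :: R)[k]'(by simp; omega) = T[k] :=
  List.getElem_append_left hk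

lemma elem_right_mem {α : Type} (T R : List α) (c : α) (m : ℕ)
    (hm : m < (T ++ c :: R).length) (h : T.length + 1 ≤ m) :
    (T ++ c :: R)[m] ∈ R := by
  have hSlen : (T ++ c :: R).length = T.length + 1 + R.length := by simp; omega
  have h2 : m = T.length + (m - T.length - 1 + 1) := by omega
  rw [getElem_idx_congr h2, List.getElem_append_right (by omega)]
  have h3 : T.length + (m - T.length - 1 + 1) - T.length = m - T.length - 1 + 1 := by omega
  rw [getElem_idx_congr h3]
  rw [List.getElem_cons_succ]
  exact List.getElem_mem _

lemma isAttractor_univ {α : Type} (S : List α) : IsAttractor S (Finset.Icc 1 S.length) := by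
  constructor
  · intro p hp
    exact Finset.mem_Icc.mp hp
  · intro i j h1 hij hj
    exact ⟨i, j, h1, hij, hj, rfl, i, Finset.mem_Icc.mpr ⟨h1, le_trans hij hj⟩, le_refl i, hij⟩

lemma gamma_le_card {α : Type} {S : List α} {Γ : Finset ℕ} (h : IsAttractor S Γ) :
    gamma S ≤ Γ.card := Nat.sInf_le ⟨Γ, h, rfl⟩

lemma exists_min_attractor {α : Type} (S : List α) :
    ∃ Γ : Finset ℕ, IsAttractor S Γ ∧ Γ.card = gamma S := by
  have hne : {m | ∃ Γ : Finset ℕ, IsAttractor S Γ ∧ Γ.card = m}.Nonempty :=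
    ⟨_, _, isAttractor_univ S, rfl⟩
  exact Nat.sInf_mem hne

lemma sub_prefix {α : Type} (T X : List α) (i j : ℕ) (h1 : 1 ≤ i) (hij : i ≤ j)
    (hj : j ≤ T.length) :
    ((T ++ X).drop (i-1)).take (j-i+1) = (T.drop (i-1)).take (j-i+1) := by
  rw [List.drop_append_of_le_length (by omega), List.take_append_of_le_length (by simp; omega)]

lemma drop_mid {α : Type} (T R : List α) (c : α) (m : ℕ) :
    (T ++ c :: R).drop (T.length + 1 + m) = R.drop m := by
  have h := List.drop_length_add_append (l₁ := T) (l₂ := c :: R) (m + 1)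
  have e : T.length + 1 + m = T.length + (m + 1) := by omega
  rw [e, h, List.drop_succ_cons]

/- ### Restriction of an attractor to the left block -/

lemma attr_left {α : Type} [DecidableEq α] (T R : List α) (c : α) (Γ : Finset ℕ)
    (hA : IsAttractor (T ++ c :: R) Γ)
    (hdisj : ∀ a ∈ T, a ∉ R) (hc1 : c ∉ T) :
    IsAttractor T (Γ.filter (· ≤ T.length)) := by
  have hSlen : (T ++ c :: R).length = T.length + 1 + R.length := by simp; omega
  refine ⟨?_, ?_⟩
  · intro p hp
    rw [Finset.mem_filter] at hp
    exact ⟨(hA.1 p hp.1).1, hp.2⟩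
  · intro i j h1 hij hj
    obtain ⟨i', j', h1', hij', hj', heq, p, hp, hpi, hpj⟩ := hA.2 i j h1 hij (by omega)
    have hlenL := sub_len (T ++ c :: R) i' j' h1' hij' hj'
    have hlenR := sub_len (T ++ c :: R) i j h1 hij (by omega)
    have hL : j' - i' + 1 = j - i + 1 := by
      have := congrArg List.length heq
      rw [hlenL, hlenR] at this; exact this
    have hj'T : j' ≤ T.length := by
      by_contra hcon
      push_neg at hcon
      by_cases hi' : i' ≤ T.length + 1
      · -- the occurrence covers the separator position
        have hkL : T.length + 1 - i' < ((((T++c::R)).drop (i'-1)).take (j'-i'+1)).length := by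
          rw [hlenL]; omega
        have hkR : T.length + 1 - i' < ((((T++c::R)).drop (i-1)).take (j-i+1)).length := by
          rw [hlenR]; omega
        have e1 := sub_getElem' (T++c::R) (i'-1) (j'-i'+1) (T.length + 1 - i') T.length hkL
          (by omega)
        have e2 := sub_getElem' (T++c::R) (i-1) (j-i+1) (T.length + 1 - i')
          (i - 1 + (T.length + 1 - i')) hkR rfl
        have e3 := List.getElem_of_eq heq hkL
        have e4 : (T++c::R)[T.length]'(by omega) = (T++c::R)[i - 1 + (T.length + 1 - i')]'(by
            simp at hkR ⊢; omega) := (e1.symm.trans e3).trans e2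
        have hidx : i - 1 + (T.length + 1 - i') < T.length := by omega
        have e5 : (T++c::R)[i - 1 + (T.length + 1 - i')]'(by simp at hkR ⊢; omega)
            = T[i - 1 + (T.length + 1 - i')]'hidx := List.getElem_append_left hidx
        have : c ∈ T := by
          have := ((elem_mid T R c).symm.trans e4).trans e5
          exact this ▸ List.getElem_mem hidx
        exact hc1 this
      · -- the occurrence is entirely inside R
        have hkL : 0 < ((((T++c::R)).drop (i'-1)).take (j'-i'+1)).length := by
          rw [hlenL]; omega
        have hkR : 0 < ((((T++c::R)).drop (i-1)).take (j-i+1)).length := by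
          rw [hlenR]; omega
        have e1 := sub_getElem' (T++c::R) (i'-1) (j'-i'+1) 0 (i'-1) hkL (by omega)
        have e2 := sub_getElem' (T++c::R) (i-1) (j-i+1) 0 (i-1) hkR (by omega)
        have e3 := List.getElem_of_eq heq hkL
        have e4 : (T++c::R)[i'-1]'(by omega) = (T++c::R)[i-1]'(by omega) :=
          (e1.symm.trans e3).trans e2
        have hidx : i - 1 < T.length := by omega
        have e5 : (T++c::R)[i-1]'(by omega) = T[i-1]'hidx := List.getElem_append_left hidx
        have hmem : T[i-1]'hidx ∈ R := by
          have := elem_right_mem T R c (i'-1) (by omega) (by omega)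
          rw [e4, e5] at this
          exact this
        exact hdisj _ (List.getElem_mem hidx) hmem
    refine ⟨i', j', h1', hij', hj'T, ?_, p, ?_, hpi, hpj⟩
    · rw [← sub_prefix T (c::R) i' j' h1' hij' hj'T, ← sub_prefix T (c::R) i j h1 hij hj]
      exact heq
    · rw [Finset.mem_filter]
      exact ⟨hp, by omega⟩

/- ### Restriction of an attractor to the right block -/

lemma attr_right {α : Type} [DecidableEq α] (T R : List α) (c : α) (Γ : Finset ℕ)
    (hA : IsAttractor (T ++ c :: R) Γ)
    (hdisj : ∀ a ∈ T, a ∉ R) (hc2 : c ∉ R) :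
    IsAttractor R ((Γ.filter (fun p => T.length + 2 ≤ p)).image (fun p => p - (T.length + 1))) := by
  have hSlen : (T ++ c :: R).length = T.length + 1 + R.length := by simp; omega
  refine ⟨?_, ?_⟩
  · intro p hp
    simp only [Finset.mem_image, Finset.mem_filter] at hp
    obtain ⟨q, ⟨hqΓ, hq2⟩, rfl⟩ := hp
    have := hA.1 q hqΓ
    omega
  · intro i j h1 hij hj
    obtain ⟨i', j', h1', hij', hj', heq, p, hp, hpi, hpj⟩ :=
      hA.2 (i + T.length + 1) (j + T.length + 1) (by omega) (by omega) (by omega)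
    have e2 : (i + T.length + 1) - 1 = T.length + 1 + (i - 1) := by omega
    have e3 : (j + T.length + 1) - (i + T.length + 1) + 1 = j - i + 1 := by omega
    rw [e2, e3, drop_mid T R c (i-1)] at heq
    have hlenL := sub_len (T ++ c :: R) i' j' h1' hij' hj'
    have hlenR := sub_len R i j h1 hij hj
    have hL : j' - i' + 1 = j - i + 1 := by
      have := congrArg List.length heq
      rw [hlenL, hlenR] at this; exact this
    have hi'' : T.length + 2 ≤ i' := by
      by_contra hcon
      push_neg at hcon
      by_cases hj'n : j' ≤ T.length
      · -- occurrence inside T, but target starts with an element of R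
        have hkL : 0 < ((((T++c::R)).drop (i'-1)).take (j'-i'+1)).length := by
          rw [hlenL]; omega
        have hkR : 0 < ((R.drop (i-1)).take (j-i+1)).length := by
          rw [hlenR]; omega
        have e1 := sub_getElem' (T++c::R) (i'-1) (j'-i'+1) 0 (i'-1) hkL (by omega)
        have e2' := sub_getElem' R (i-1) (j-i+1) 0 (i-1) hkR (by omega)
        have e3' := List.getElem_of_eq heq hkL
        have e4 : (T++c::R)[i'-1]'(by omega) = R[i-1]'(by simp at hkR; omega) :=
          (e1.symm.trans e3').trans e2'
        have hidx : i' - 1 < T.length := by omega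
        have e5 : (T++c::R)[i'-1]'(by omega) = T[i'-1]'hidx := List.getElem_append_left hidx
        have hmem : T[i'-1]'hidx ∈ R := by
          rw [← e5, e4]
          exact List.getElem_mem _
        exact hdisj _ (List.getElem_mem hidx) hmem
      · -- occurrence covers the separator, but target consists of elements of R
        push_neg at hj'n
        have hkL : T.length + 1 - i' < ((((T++c::R)).drop (i'-1)).take (j'-i'+1)).length := by
          rw [hlenL]; omega
        have hkR : T.length + 1 - i' < ((R.drop (i-1)).take (j-i+1)).length := by
          rw [hlenR]; omega
        have e1 := sub_getElem' (T++c::R) (i'-1) (j'-i'+1) (T.length + 1 - i') T.length hkL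
          (by omega)
        have e2' := sub_getElem' R (i-1) (j-i+1) (T.length + 1 - i')
          (i - 1 + (T.length + 1 - i')) hkR rfl
        have e3' := List.getElem_of_eq heq hkL
        have e4 : (T++c::R)[T.length]'(by omega) = R[i - 1 + (T.length + 1 - i')]'(by
            simp at hkR ⊢; omega) := (e1.symm.trans e3').trans e2'
        have : c ∈ R := by
          have := (elem_mid T R c).symm.trans e4
          exact this ▸ List.getElem_mem _
        exact hc2 this
    refine ⟨i' - (T.length + 1), j' - (T.length + 1), by omega, by omega, by omega, ?_, ?_⟩
    · have e4 : i' - 1 = T.length + 1 + (i' - (T.length + 1) - 1) := by omega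
      have e5 : j' - (T.length + 1) - (i' - (T.length + 1)) + 1 = j' - i' + 1 := by omega
      rw [e5, ← drop_mid T R c (i' - (T.length + 1) - 1), ← e4]
      exact heq
    · refine ⟨p - (T.length + 1), ?_, by omega, by omega⟩
      simp only [Finset.mem_image, Finset.mem_filter]
      exact ⟨p, ⟨hp, by omega⟩, rfl⟩

/- ### Key lemma: one separator -/

lemma key_lemma {α : Type} [DecidableEq α] (T R : List α) (c : α)
    (hdisj : ∀ a ∈ T, a ∉ R) (hc1 : c ∉ T) (hc2 : c ∉ R) :
    gamma T + gamma R ≤ gamma (T ++ c :: R) := by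
  obtain ⟨Γ, hΓ, hcard⟩ := exists_min_attractor (T ++ c :: R)
  rw [← hcard]
  have h1 : gamma T ≤ (Γ.filter (· ≤ T.length)).card :=
    gamma_le_card (attr_left T R c Γ hΓ hdisj hc1)
  have h2 : gamma R ≤
      ((Γ.filter (fun p => T.length + 2 ≤ p)).image (fun p => p - (T.length + 1))).card :=
    gamma_le_card (attr_right T R c Γ hΓ hdisj hc2)
  have h3 : ((Γ.filter (fun p => T.length + 2 ≤ p)).image (fun p => p - (T.length + 1))).card ≤
      (Γ.filter (fun p => T.length + 2 ≤ p)).card := Finset.card_image_le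
  have hdisjf : Disjoint (Γ.filter (· ≤ T.length)) (Γ.filter (fun p => T.length + 2 ≤ p)) := by
    rw [Finset.disjoint_left]
    intro a ha hb
    simp only [Finset.mem_filter] at ha hb
    omega
  have h4 : (Γ.filter (· ≤ T.length)).card + (Γ.filter (fun p => T.length + 2 ≤ p)).card
      ≤ Γ.card := by
    rw [← Finset.card_union_of_disjoint hdisjf]
    exact Finset.card_le_card (Finset.union_subset (Finset.filter_subset _ _)
      (Finset.filter_subset _ _))
  omega

lemma mem_joinSep {α : Type} (Ts : List (List α)) (cs : List α) (a : α)
    (h : a ∈ joinSep Ts cs) : (∃ U ∈ Ts, a ∈ U) ∨ a ∈ cs := by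
  induction Ts generalizing cs with
  | nil => simp [joinSep] at h
  | cons T Ts ih =>
    cases Ts with
    | nil => exact Or.inl ⟨T, by simp, by simpa [joinSep] using h⟩
    | cons T2 Ts' =>
      cases cs with
      | nil =>
        simp only [joinSep, List.mem_append] at h
        rcases h with h | h
        · exact Or.inl ⟨T, by simp, h⟩
        · rcases ih [] h with ⟨U, hU, ha⟩ | h2
          · exact Or.inl ⟨U, by simp [hU], ha⟩
          · simp at h2
      | cons c cs' =>
        simp only [joinSep, List.mem_append, List.mem_cons] at h
        rcases h with h | h | h
        · exact Or.inl ⟨T, by simp, h⟩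
        · exact Or.inr (by simp [h])
        · rcases ih cs' h with ⟨U, hU, ha⟩ | h2
          · exact Or.inl ⟨U, by simp [hU], ha⟩
          · exact Or.inr (by simp [h2])

/-- If `S = S₁ c₁ S₂ c₂ ⋯ c_{m−1} S_m` where the `Sᵢ` are nonempty strings over
pairwise disjoint alphabets and the separators `c₁, ..., c_{m−1}` are pairwise
distinct symbols occurring in no `Sᵢ`, then `γ(S) ≥ Σᵢ γ(Sᵢ)`. -/
theorem gamma_joinSep_ge {α : Type} [DecidableEq α]
    (Ss : List (List α)) (seps : List α)
    (hm : 1 ≤ Ss.length) (hlen : seps.length + 1 = Ss.length)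
    (hne : ∀ T ∈ Ss, T ≠ [])
    (hdisj : Ss.Pairwise (fun T U => ∀ a ∈ T, a ∉ U))
    (hnd : seps.Nodup) (hsep : ∀ c ∈ seps, ∀ T ∈ Ss, c ∉ T) :
    (Ss.map gamma).sum ≤ gamma (joinSep Ss seps) := by
  induction Ss generalizing seps with
  | nil => simp at hm
  | cons T Ts ih =>
    cases Ts with
    | nil => simp [joinSep]
    | cons T2 Ts' =>
      cases seps with
      | nil => simp at hlen
      | cons c cs =>
        have hjoin : joinSep (T :: T2 :: Ts') (c :: cs) = T ++ c :: joinSep (T2 :: Ts') cs :=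
          rfl
        set R := joinSep (T2 :: Ts') cs with hR
        obtain ⟨hTd, hrest⟩ := List.pairwise_cons.mp hdisj
        have hdisjTR : ∀ a ∈ T, a ∉ R := by
          intro a ha haR
          rcases mem_joinSep _ _ _ haR with ⟨U, hU, haU⟩ | hcs
          · exact hTd U hU a ha haU
          · exact hsep a (by simp [hcs]) T (by simp) ha
        have hc1 : c ∉ T := hsep c (by simp) T (by simp)
        have hc2 : c ∉ R := by
          intro hcR
          rcases mem_joinSep _ _ _ hcR with ⟨U, hU, hcU⟩ | hcs
          · exact hsep c (by simp) U (by simp [hU]) hcU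
          · exact (List.nodup_cons.mp hnd).1 hcs
        have hrec : ((T2 :: Ts').map gamma).sum ≤ gamma R := by
          apply ih cs (by simp) (by simpa using hlen)
          · intro U hU; exact hne U (by simp [hU])
          · exact hrest
          · exact (List.nodup_cons.mp hnd).2
          · intro c' hc' U hU; exact hsep c' (by simp [hc']) U (by simp [hU])
        have hkey := key_lemma T R c hdisjTR hc1 hc2
        rw [hjoin]
        simp only [List.map_cons, List.sum_cons] at hrec ⊢
        omega
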